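/- Let N be a positive integer and let j be an integer with 1 ≤ j ≤ ⌊(N+1)/2⌋. Set μ = cos(jπ/(N+2)), and let W ∈ ℝ^N be the vector with k-th coordinate W_k = (−1)^k U_{k−1}(μ) U_k(μ) for k = 1,…,N. Then ((I+A) − (1/(4μ²))(I−B)) W = 0; that is, W is a principal (generalized eigen-) vector of the matrix pencil I+A − λ(I−B) corresponding to the characteristic number λ = (1/4)sec²(jπ/(N+2)). -/

import Mathlib

open Polynomial Chebyshev

/-- Evaluation of the Chebyshev polynomial of the second kind. -/
noncomputable def Ucheb (n : ℤ) (x : ℝ) : ℝ := (Polynomial.Chebyshev.U ℝ n).eval x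

/-- Evaluation of the derivative of the Chebyshev polynomial of the second kind. -/
noncomputable def Ucheb' (n : ℤ) (x : ℝ) : ℝ :=
  (Polynomial.derivative (Polynomial.Chebyshev.U ℝ n)).eval x

/-- The N×N matrix with entries 1/2 on the first off-diagonals and 0 elsewhere. -/
noncomputable def matA (N : ℕ) : Matrix (Fin N) (Fin N) ℝ :=
  fun i j => if ((i : ℤ) - (j : ℤ)).natAbs = 1 then 1/2 else 0

/-- The N×N matrix with entries 1/2 on the second off-diagonals and 0 elsewhere. -/
noncomputable def matB (N : ℕ) : Matrix (Fin N) (Fin N) ℝ :=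
  fun i j => if ((i : ℤ) - (j : ℤ)).natAbs = 2 then 1/2 else 0


noncomputable def wv (μ : ℝ) (k : ℤ) : ℝ := (-1 : ℝ)^(k+1) * Ucheb k μ * Ucheb (k+1) μ

lemma urec (μ : ℝ) (m : ℤ) : Ucheb (m+2) μ = 2*μ*Ucheb (m+1) μ - Ucheb m μ := by
  simp [Ucheb, Polynomial.Chebyshev.U_add_two]

lemma zs : ∀ m : ℤ, (-1:ℝ)^(m+1) = -(-1:ℝ)^m := by
  intro m; rw [zpow_add_one₀ (by norm_num : (-1:ℝ) ≠ 0)]; ring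

lemma key (μ : ℝ) (k : ℤ) :
    wv μ k - (wv μ (k-2) + wv μ (k+2))/2 = 4*μ^2*(wv μ k + (wv μ (k-1) + wv μ (k+1))/2) := by
  obtain ⟨s, hs⟩ : ∃ s, s = (-1:ℝ)^k := ⟨_, rfl⟩
  obtain ⟨a, ha⟩ : ∃ a, a = Ucheb k μ := ⟨_, rfl⟩
  obtain ⟨b, hb⟩ : ∃ b, b = Ucheb (k+1) μ := ⟨_, rfl⟩
  have h1 : Ucheb (k+2) μ = 2*μ*b - a := by rw [ha, hb]; exact urec μ k
  have h2 : Ucheb (k+3) μ = 2*μ*(2*μ*b-a) - b := by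
    have := urec μ (k+1); rw [show k+1+2 = k+3 by ring, show k+1+1 = k+2 by ring, h1] at this
    rw [this, hb]
  have h3 : Ucheb (k-1) μ = 2*μ*a - b := by
    have := urec μ (k-1); rw [show k-1+2 = k+1 by ring, show k-1+1 = k by ring, ← ha, ← hb] at this
    linarith
  have h4 : Ucheb (k-2) μ = 2*μ*(2*μ*a-b) - a := by
    have := urec μ (k-2); rw [show k-2+2 = k by ring, show k-2+1 = k-1 by ring, h3, ← ha] at this
    linarith
  have sm1 : (-1:ℝ)^(k-1) = -s := by
    have := zs (k-1); rw [show k-1+1 = k by ring, ← hs] at this; linarith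
  have sp1 : (-1:ℝ)^(k+1) = -s := by rw [zs k, hs]
  have sp2 : (-1:ℝ)^(k+2) = s := by
    rw [show (k:ℤ)+2 = k+1+1 by ring, zs (k+1), sp1, neg_neg]
  have sp3 : (-1:ℝ)^(k+3) = -s := by
    rw [show (k:ℤ)+3 = k+2+1 by ring, zs (k+2), sp2]
  have e0 : wv μ k = -s*a*b := by rw [wv, sp1, ← ha, ← hb]; try ring
  have em1 : wv μ (k-1) = s*(2*μ*a-b)*a := by
    rw [wv, show k-1+1 = k by ring, h3, ← hs, ← ha]; try ring
  have ep1 : wv μ (k+1) = s*b*(2*μ*b-a) := by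
    rw [wv, show k+1+1 = k+2 by ring, h1, sp2, ← hb]; try ring
  have em2 : wv μ (k-2) = -s*(2*μ*(2*μ*a-b)-a)*(2*μ*a-b) := by
    rw [wv, show k-2+1 = k-1 by ring, h4, h3, sm1]; try ring
  have ep2 : wv μ (k+2) = -s*(2*μ*b-a)*(2*μ*(2*μ*b-a)-b) := by
    rw [wv, show k+2+1 = k+3 by ring, h1, h2, sp3]; try ring
  rw [e0, em1, ep1, em2, ep2]; ring

noncomputable def cc (lam : ℝ) (d : ℤ) : ℝ :=
  (if d = 0 then 1 - lam else 0) + (if d.natAbs = 1 then 1/2 else 0)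
    + (if d.natAbs = 2 then lam/2 else 0)


lemma entry (N : ℕ) (lam : ℝ) (i k : Fin N) :
    (((1 : Matrix (Fin N) (Fin N) ℝ) + matA N) - lam • (1 - matB N)) i k
      = cc lam ((i:ℤ) - (k:ℤ)) := by
  simp only [Matrix.sub_apply, Matrix.add_apply, Matrix.smul_apply, Matrix.one_apply,
    matA, matB, cc, smul_eq_mul]
  have hone : (if i = k then (1:ℝ) else 0) = (if (i:ℤ)-(k:ℤ) = 0 then 1 else 0) := by
    by_cases h : i = k
    · simp [h]
    · have h2 : (i:ℤ) - (k:ℤ) ≠ 0 := fun hc => h (Fin.ext (by omega))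
      simp [h, h2]
  rw [hone]
  split_ifs <;> first | ring | (exfalso; omega)

lemma cc_far (lam : ℝ) (d : ℤ) (h : 3 ≤ d.natAbs) : cc lam d = 0 := by
  simp only [cc, if_neg (by omega : ¬ d = 0), if_neg (by omega : ¬ d.natAbs = 1),
    if_neg (by omega : ¬ d.natAbs = 2)]
  norm_num


theorem stmt3 (N : ℕ) (hN : 0 < N) (j : ℕ) (hj1 : 1 ≤ j) (hj2 : j ≤ (N + 1) / 2)
    (μ : ℝ) (hμ : μ = Real.cos (j * Real.pi / (N + 2)))
    (W : Fin N → ℝ)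
    (hW : ∀ i : Fin N, W i = (-1 : ℝ) ^ ((i : ℕ) + 1) * Ucheb (i : ℕ) μ * Ucheb ((i : ℕ) + 1) μ) :
    Matrix.mulVec (((1 : Matrix (Fin N) (Fin N) ℝ) + matA N)
        - (1 / (4 * μ ^ 2)) • ((1 : Matrix (Fin N) (Fin N) ℝ) - matB N)) W = 0 := by
  have pi_pos := Real.pi_pos
  set th : ℝ := j * Real.pi / (N + 2) with hθ
  have hj2' : 2 * j ≤ N + 1 := by omega
  have hden : (0:ℝ) < (N:ℝ) + 2 := by positivity
  have hθpos : 0 < th := by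
    apply div_pos _ hden
    have : (1:ℝ) ≤ (j:ℝ) := by exact_mod_cast hj1
    nlinarith
  have hθhalf : th < Real.pi / 2 := by
    rw [hθ, div_lt_div_iff₀ hden (by norm_num : (0:ℝ) < 2)]
    have h2 : ((2*j : ℕ):ℝ) ≤ ((N+1 : ℕ):ℝ) := by exact_mod_cast hj2'
    push_cast at h2
    nlinarith
  have hμpos : 0 < μ := by
    rw [hμ]
    exact Real.cos_pos_of_mem_Ioo ⟨by linarith, hθhalf⟩
  have hμ0 : μ ≠ 0 := ne_of_gt hμpos
  have hsin : Real.sin th ≠ 0 := by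
    apply ne_of_gt
    exact Real.sin_pos_of_pos_of_lt_pi hθpos (by linarith)
  have hu : Ucheb ((N:ℤ)+1) μ = 0 := by
    have h := Polynomial.Chebyshev.U_real_cos th ((N:ℤ)+1)
    push_cast at h
    have harg : ((N:ℝ) + 1 + 1) * th = j * Real.pi := by
      rw [hθ]; field_simp; ring
    have hz : Real.sin ((j:ℝ) * Real.pi) = 0 := by
      simpa using Real.sin_nat_mul_pi j
    rw [harg, hz] at h
    have h2 : Ucheb ((N:ℤ)+1) μ * Real.sin th = 0 := by
      rw [Ucheb, hμ]; exact_mod_cast h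
    rcases mul_eq_zero.mp h2 with h' | h'
    · exact h'
    · exact absurd h' hsin
  have hwm1 : wv μ (-1) = 0 := by
    rw [wv, show (-1:ℤ)+1 = 0 by ring]
    simp [Ucheb, Polynomial.Chebyshev.U_neg_one]
  have hwm2 : wv μ (-2) = 0 := by
    rw [wv, show (-2:ℤ)+1 = -1 by ring]
    simp [Ucheb, Polynomial.Chebyshev.U_neg_one]
  have hwN : wv μ (N:ℤ) = 0 := by rw [wv, hu]; ring
  have hwN1 : wv μ ((N:ℤ)+1) = 0 := by
    rw [wv]
    have : Ucheb ((N:ℤ)+1) μ = 0 := hu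
    rw [this]; ring
  set lam : ℝ := 1 / (4 * μ ^ 2) with hlam
  funext i
  have hWw : ∀ k : Fin N, W k = wv μ (k : ℕ) := by
    intro k
    rw [hW k, wv]
    have : ((-1:ℝ))^(((k:ℕ):ℤ)+1) = (-1:ℝ)^((k:ℕ)+1) := by
      rw [show (((k:ℕ):ℤ)+1) = (((k:ℕ)+1 : ℕ) : ℤ) by push_cast; ring, zpow_natCast]
    rw [this]
    try norm_num
  rw [Matrix.mulVec, dotProduct]
  simp only [Pi.zero_apply]
  calc (∑ k : Fin N, (((1 : Matrix (Fin N) (Fin N) ℝ) + matA N)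
        - lam • ((1 : Matrix (Fin N) (Fin N) ℝ) - matB N)) i k * W k)
      = ∑ k : Fin N, cc lam ((i:ℤ) - (k:ℕ)) * wv μ (k:ℕ) := by
        apply Finset.sum_congr rfl
        intro k _
        rw [entry, hWw k]
    _ = ∑ n ∈ Finset.range N, cc lam ((i:ℤ) - (n:ℕ)) * wv μ (n:ℕ) := by
        exact Fin.sum_univ_eq_sum_range (fun n => cc lam ((i:ℤ) - (n:ℕ)) * wv μ (n:ℕ)) N
    _ = ∑ t ∈ Finset.Icc (0:ℤ) ((N:ℤ)-1), cc lam ((i:ℤ) - t) * wv μ t := by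
        have himg : (Finset.range N).image (fun n : ℕ => (n : ℤ)) = Finset.Icc (0:ℤ) ((N:ℤ)-1) := by
          ext t
          simp only [Finset.mem_image, Finset.mem_Icc, Finset.mem_range]
          constructor
          · rintro ⟨n, hn, rfl⟩; omega
          · intro ht; exact ⟨t.toNat, by omega, by omega⟩
        rw [← himg, Finset.sum_image (by intro a _ b _ h; simp only at h; omega)]
    _ = ∑ t ∈ Finset.Icc (-2:ℤ) ((N:ℤ)+1), cc lam ((i:ℤ) - t) * wv μ t := by
        apply Finset.sum_subset (Finset.Icc_subset_Icc (by omega) (by omega))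
        intro x hx hx'
        simp only [Finset.mem_Icc] at hx hx'
        have : x = -2 ∨ x = -1 ∨ x = (N:ℤ) ∨ x = (N:ℤ)+1 := by omega
        rcases this with rfl | rfl | rfl | rfl
        · rw [hwm2]; ring
        · rw [hwm1]; ring
        · rw [hwN]; ring
        · rw [hwN1]; ring
    _ = ∑ t ∈ Finset.Icc ((i:ℤ)-2) ((i:ℤ)+2), cc lam ((i:ℤ) - t) * wv μ t := by
        symm
        apply Finset.sum_subset
        · apply Finset.Icc_subset_Icc <;> omega
        · intro x hx hx'
          simp only [Finset.mem_Icc] at hx hx'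
          rw [cc_far lam _ (by omega)]; ring
    _ = 0 := by
        rw [show Finset.Icc ((i:ℤ)-2) ((i:ℤ)+2)
            = insert ((i:ℤ)-2) (insert ((i:ℤ)-1) (insert ((i:ℤ))
              (insert ((i:ℤ)+1) {(i:ℤ)+2}))) from by
          ext x; simp only [Finset.mem_Icc, Finset.mem_insert, Finset.mem_singleton]; omega]
        rw [Finset.sum_insert (by simp only [Finset.mem_insert, Finset.mem_singleton]; push_cast; omega),
          Finset.sum_insert (by simp only [Finset.mem_insert, Finset.mem_singleton]; push_cast; omega),
          Finset.sum_insert (by simp only [Finset.mem_insert, Finset.mem_singleton]; push_cast; omega),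
          Finset.sum_insert (by simp only [Finset.mem_singleton]; push_cast; omega),
          Finset.sum_singleton]
        have c2 : cc lam ((i:ℤ) - ((i:ℤ)-2)) = lam/2 := by
          rw [show (i:ℤ) - ((i:ℤ)-2) = 2 by ring]; simp [cc]
        have c1 : cc lam ((i:ℤ) - ((i:ℤ)-1)) = 1/2 := by
          rw [show (i:ℤ) - ((i:ℤ)-1) = 1 by ring]; simp [cc]
        have c0 : cc lam ((i:ℤ) - (i:ℤ)) = 1 - lam := by
          rw [show (i:ℤ) - (i:ℤ) = 0 by ring]; simp [cc]
        have cm1 : cc lam ((i:ℤ) - ((i:ℤ)+1)) = 1/2 := by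
          rw [show (i:ℤ) - ((i:ℤ)+1) = -1 by ring]; simp [cc]
        have cm2 : cc lam ((i:ℤ) - ((i:ℤ)+2)) = lam/2 := by
          rw [show (i:ℤ) - ((i:ℤ)+2) = -2 by ring]; simp [cc]
        rw [c2, c1, c0, cm1, cm2]
        have hk := key μ (i:ℤ)
        have hexp : lam * (4*μ^2) = 1 := by
          rw [hlam]; field_simp
        linear_combination (-lam) * hk
          + (-(wv μ (i:ℤ) + (wv μ ((i:ℤ)-1) + wv μ ((i:ℤ)+1))/2)) * hexp
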